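/- Every lattice parallelogram (Minkowski sum of two non-parallel lattice segments in ℤ²) is a normal lattice polygon. -/

import Mathlib

open Set Pointwise

/-- `x` is a lattice point (all coordinates are integers). -/
def IsLat {n : ℕ} (x : Fin n → ℝ) : Prop := ∀ i, ∃ m : ℤ, x i = (m : ℝ)

/-- The set of lattice points of `P`. -/
def latPts {n : ℕ} (P : Set (Fin n → ℝ)) : Set (Fin n → ℝ) := {x ∈ P | IsLat x}

/-- `P` is a lattice polytope: the convex hull of finitely many lattice points. -/
def IsLatticePolytope {n : ℕ} (P : Set (Fin n → ℝ)) : Prop :=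
  ∃ S : Finset (Fin n → ℝ), (∀ x ∈ S, IsLat x) ∧ P = convexHull ℝ (S : Set (Fin n → ℝ))

/-- The dimension of a polytope: the dimension of its affine hull. -/
noncomputable def polyDim {n : ℕ} (P : Set (Fin n → ℝ)) : ℕ :=
  Module.finrank ℝ (affineSpan ℝ P).direction

/-- `P` is normal: for every `k ≥ 1`, every lattice point of the dilate `k • P`
is a sum of `k` lattice points of `P`. -/
def IsNormal {n : ℕ} (P : Set (Fin n → ℝ)) : Prop :=
  ∀ k : ℕ, 1 ≤ k → ∀ v ∈ latPts ((k : ℝ) • P),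
    ∃ u : Fin k → (Fin n → ℝ), (∀ i, u i ∈ latPts P) ∧ v = ∑ i, u i

lemma isLat_add {n : ℕ} {x y : Fin n → ℝ} (hx : IsLat x) (hy : IsLat y) : IsLat (x + y) := by
  intro i
  obtain ⟨mx, hmx⟩ := hx i
  obtain ⟨my, hmy⟩ := hy i
  exact ⟨mx + my, by simp [hmx, hmy]⟩

lemma isLat_sub {n : ℕ} {x y : Fin n → ℝ} (hx : IsLat x) (hy : IsLat y) : IsLat (x - y) := by
  intro i
  obtain ⟨mx, hmx⟩ := hx i
  obtain ⟨my, hmy⟩ := hy i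
  exact ⟨mx - my, by simp [hmx, hmy]⟩

lemma isLat_zero {n : ℕ} : IsLat (0 : Fin n → ℝ) := fun i => ⟨0, by simp⟩

lemma isLat_natsmul {n : ℕ} (m : ℕ) {x : Fin n → ℝ} (hx : IsLat x) : IsLat ((m : ℝ) • x) := by
  intro i
  obtain ⟨mx, hmx⟩ := hx i
  exact ⟨m * mx, by simp [Pi.smul_apply, hmx]⟩

lemma sum_range_ite {M : Type*} [AddCommMonoid M] (n m : ℕ) (hm : m ≤ n) (x : M) :
    ∑ i ∈ Finset.range n, (if i < m then x else 0) = m • x := by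
  induction n with
  | zero => simp [Nat.le_zero.mp hm]
  | succ n ih =>
    rcases Nat.lt_or_ge m (n + 1) with h | h
    · have hm' : m ≤ n := Nat.lt_succ_iff.mp h
      rw [Finset.sum_range_succ, if_neg (by omega), add_zero]
      exact ih hm'
    · have hmn : m = n + 1 := le_antisymm hm h
      subst hmn
      rw [Finset.sum_range_succ, if_pos (by omega)]
      have h2 : ∑ i ∈ Finset.range n, (if i < n + 1 then x else 0)
          = ∑ _i ∈ Finset.range n, x :=
        Finset.sum_congr rfl fun i hi => if_pos (Nat.lt_succ_of_lt (Finset.mem_range.mp hi))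
      rw [h2, Finset.sum_const, Finset.card_range, succ_nsmul]

lemma fin_sum_ite {M : Type*} [AddCommMonoid M] (n m : ℕ) (hm : m ≤ n) (x : M) :
    ∑ i : Fin n, (if (i : ℕ) < m then x else 0) = m • x := by
  rw [Fin.sum_univ_eq_sum_range (fun i => if i < m then x else 0)]
  exact sum_range_ite n m hm x
/-- A lattice parallelogram, the Minkowski sum of two non-parallel lattice segments in `ℤ²`,
is normal. -/
theorem stmt5 (a₁ b₁ a₂ b₂ : Fin 2 → ℝ)
    (h₁ : IsLat a₁) (h₂ : IsLat b₁) (h₃ : IsLat a₂) (h₄ : IsLat b₂)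
    (hind : LinearIndependent ℝ ![b₁ - a₁, b₂ - a₂]) :
    IsNormal (segment ℝ a₁ b₁ + segment ℝ a₂ b₂) := by
  intro k hk v hv
  obtain ⟨n, rfl⟩ : ∃ n, k = n + 1 := ⟨k - 1, by omega⟩
  obtain ⟨hvP, hvLat⟩ := hv
  rw [Set.mem_smul_set] at hvP
  obtain ⟨p, hp, hpv⟩ := hvP
  obtain ⟨x, hx, y, hy, rfl⟩ := Set.mem_add.mp hp
  rw [segment_eq_image'] at hx hy
  obtain ⟨s, hs, rfl⟩ := hx
  obtain ⟨t, ht, rfl⟩ := hy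
  obtain ⟨hs0, hs1⟩ := hs
  obtain ⟨ht0, ht1⟩ := ht
  set σ : ℝ := ((n : ℝ) + 1) * s with hσdef
  set τ : ℝ := ((n : ℝ) + 1) * t with hτdef
  have hσ0 : 0 ≤ σ := by positivity
  have hτ0 : 0 ≤ τ := by positivity
  have hσk : σ ≤ (n : ℝ) + 1 := by nlinarith
  have hτk : τ ≤ (n : ℝ) + 1 := by nlinarith
  set n₁ : ℕ := min (⌊σ⌋.toNat) n with hn₁def
  set n₂ : ℕ := min (⌊τ⌋.toNat) n with hn₂def
  have hn₁n : n₁ ≤ n := min_le_right _ _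
  have hn₂n : n₂ ≤ n := min_le_right _ _
  have floor_le_cast : ∀ (r : ℝ), 0 ≤ r → ((⌊r⌋.toNat : ℝ)) ≤ r := by
    intro r hr
    have h1 : ((⌊r⌋.toNat : ℤ) : ℝ) = ((⌊r⌋ : ℤ) : ℝ) := by
      exact_mod_cast congrArg (fun z : ℤ => (z : ℝ)) (Int.toNat_of_nonneg (Int.floor_nonneg.mpr hr))
    calc ((⌊r⌋.toNat : ℝ)) = ((⌊r⌋ : ℤ) : ℝ) := by exact_mod_cast h1
      _ ≤ r := Int.floor_le r
  have hn₁le : (n₁ : ℝ) ≤ σ :=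
    le_trans (by exact_mod_cast Nat.cast_le.mpr (min_le_left (⌊σ⌋.toNat) n)) (floor_le_cast σ hσ0)
  have hn₂le : (n₂ : ℝ) ≤ τ :=
    le_trans (by exact_mod_cast Nat.cast_le.mpr (min_le_left (⌊τ⌋.toNat) n)) (floor_le_cast τ hτ0)
  have sub_le_one : ∀ (r : ℝ) (m : ℕ), 0 ≤ r → r ≤ (n : ℝ) + 1 → m = min (⌊r⌋.toNat) n →
      r - m ≤ 1 := by
    intro r m hr0 hrk hm
    rcases le_or_gt (⌊r⌋.toNat) n with h | h
    · have hmm : m = ⌊r⌋.toNat := by rw [hm]; exact min_eq_left h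
      have h1 : ((m : ℤ) : ℝ) = ((⌊r⌋ : ℤ) : ℝ) := by
        rw [hmm]; exact_mod_cast congrArg (fun z : ℤ => (z : ℝ))
          (Int.toNat_of_nonneg (Int.floor_nonneg.mpr hr0))
      have h2 : r < (⌊r⌋ : ℝ) + 1 := Int.lt_floor_add_one r
      have h3 : (m : ℝ) = ((⌊r⌋ : ℤ) : ℝ) := by exact_mod_cast h1
      linarith
    · have hmm : m = n := by rw [hm]; exact min_eq_right h.le
      rw [hmm]
      linarith
  have hσ1 : σ - n₁ ≤ 1 := sub_le_one σ n₁ hσ0 hσk hn₁def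
  have hτ1 : τ - n₂ ≤ 1 := sub_le_one τ n₂ hτ0 hτk hn₂def
  set q : Fin 2 → ℝ := (a₁ + (σ - n₁) • (b₁ - a₁)) + (a₂ + (τ - n₂) • (b₂ - a₂)) with hqdef
  have hkey : v = (n : ℝ) • (a₁ + a₂) + (n₁ : ℝ) • (b₁ - a₁) + (n₂ : ℝ) • (b₂ - a₂) + q := by
    rw [← hpv, hqdef, hσdef, hτdef]
    push_cast
    module
  -- membership of q
  have hqmem : q ∈ segment ℝ a₁ b₁ + segment ℝ a₂ b₂ := by
    apply Set.add_mem_add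
    · rw [segment_eq_image']
      exact ⟨σ - n₁, ⟨by linarith, hσ1⟩, rfl⟩
    · rw [segment_eq_image']
      exact ⟨τ - n₂, ⟨by linarith, hτ1⟩, rfl⟩
  have hqlat : IsLat q := by
    have : q = v - ((n : ℝ) • (a₁ + a₂) + (n₁ : ℝ) • (b₁ - a₁) + (n₂ : ℝ) • (b₂ - a₂)) := by
      rw [hkey]; abel
    rw [this]
    exact isLat_sub hvLat (isLat_add (isLat_add (isLat_natsmul n (isLat_add h₁ h₃))
      (isLat_natsmul n₁ (isLat_sub h₂ h₁))) (isLat_natsmul n₂ (isLat_sub h₄ h₃)))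
  refine ⟨fun i => if (i : ℕ) < n then
      (a₁ + a₂) + (if (i : ℕ) < n₁ then b₁ - a₁ else 0) + (if (i : ℕ) < n₂ then b₂ - a₂ else 0)
    else q, ?_, ?_⟩
  · intro i
    by_cases hi : (i : ℕ) < n
    · simp only [if_pos hi]
      constructor
      · have heq : (a₁ + a₂) + (if (i : ℕ) < n₁ then b₁ - a₁ else 0)
            + (if (i : ℕ) < n₂ then b₂ - a₂ else 0)
            = (a₁ + (if (i : ℕ) < n₁ then b₁ - a₁ else 0))
            + (a₂ + (if (i : ℕ) < n₂ then b₂ - a₂ else 0)) := by abel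
        rw [heq]
        apply Set.add_mem_add
        · by_cases h : (i : ℕ) < n₁
          · rw [if_pos h]
            have : a₁ + (b₁ - a₁) = b₁ := by abel
            rw [this]; exact right_mem_segment ℝ a₁ b₁
          · rw [if_neg h, add_zero]; exact left_mem_segment ℝ a₁ b₁
        · by_cases h : (i : ℕ) < n₂
          · rw [if_pos h]
            have : a₂ + (b₂ - a₂) = b₂ := by abel
            rw [this]; exact right_mem_segment ℝ a₂ b₂
          · rw [if_neg h, add_zero]; exact left_mem_segment ℝ a₂ b₂
      · apply isLat_add
        apply isLat_add (isLat_add h₁ h₃)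
        · by_cases h : (i : ℕ) < n₁
          · rw [if_pos h]; exact isLat_sub h₂ h₁
          · rw [if_neg h]; exact isLat_zero
        · by_cases h : (i : ℕ) < n₂
          · rw [if_pos h]; exact isLat_sub h₄ h₃
          · rw [if_neg h]; exact isLat_zero
    · simp only [if_neg hi]
      exact ⟨hqmem, hqlat⟩
  · rw [Fin.sum_univ_castSucc]
    have hlast : (¬ ((Fin.last n : Fin (n+1)) : ℕ) < n) := by simp
    rw [if_neg hlast]
    have hcs : ∀ i : Fin n, (((Fin.castSucc i) : Fin (n+1)) : ℕ) = (i : ℕ) := fun i => rfl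
    have hsum : ∑ i : Fin n, (if ((Fin.castSucc i : Fin (n+1)) : ℕ) < n then
        (a₁ + a₂) + (if ((Fin.castSucc i : Fin (n+1)) : ℕ) < n₁ then b₁ - a₁ else 0)
          + (if ((Fin.castSucc i : Fin (n+1)) : ℕ) < n₂ then b₂ - a₂ else 0)
      else q)
        = n • (a₁ + a₂) + n₁ • (b₁ - a₁) + n₂ • (b₂ - a₂) := by
      have : ∀ i : Fin n, (if ((Fin.castSucc i : Fin (n+1)) : ℕ) < n then
          (a₁ + a₂) + (if ((Fin.castSucc i : Fin (n+1)) : ℕ) < n₁ then b₁ - a₁ else 0)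
            + (if ((Fin.castSucc i : Fin (n+1)) : ℕ) < n₂ then b₂ - a₂ else 0)
        else q) = (a₁ + a₂) + (if (i : ℕ) < n₁ then b₁ - a₁ else 0)
            + (if (i : ℕ) < n₂ then b₂ - a₂ else 0) := by
        intro i
        rw [hcs i, if_pos i.isLt]
      rw [Finset.sum_congr rfl (fun i _ => this i), Finset.sum_add_distrib,
        Finset.sum_add_distrib, Finset.sum_const, Finset.card_univ, Fintype.card_fin,
        fin_sum_ite n n₁ hn₁n, fin_sum_ite n n₂ hn₂n]
    rw [hsum, hkey, Nat.cast_smul_eq_nsmul, Nat.cast_smul_eq_nsmul, Nat.cast_smul_eq_nsmul]
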